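/- For fixed a ≥ 0, b > 0, and R > 0, let P(s) = f(a, b, (2^R − 1)/s) for s > 0, where f(a,b,c) = e^{-a/b} ∑_{i=0}^∞ ((a/b)^i/i!) · γ(1+i, c/b)/Γ(1+i). Then P(s) ~ ((2^R − 1)/(b s)) · e^{-a/b} as s → ∞, i.e., lim_{s→∞} P(s) · b s / ((2^R − 1) e^{-a/b}) = 1. -/

import Mathlib

open Real Filter

noncomputable def lowerIncGamma (p x : ℝ) : ℝ := ∫ t in (0:ℝ)..x, t ^ (p - 1) * Real.exp (-t)

noncomputable def outageF (a b c : ℝ) : ℝ :=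
  Real.exp (-(a / b)) *
    ∑' i : ℕ, ((a / b) ^ i / (Nat.factorial i)) *
      (lowerIncGamma (1 + i) (c / b) / (Nat.factorial i))

lemma lig_eq (i : ℕ) (x : ℝ) :
    lowerIncGamma (1 + i) x = ∫ t in (0:ℝ)..x, t ^ i * Real.exp (-t) := by
  have h : ∀ t : ℝ, t ^ ((1 + (i:ℝ)) - 1) = t ^ i := fun t => by
    rw [show (1 + (i:ℝ)) - 1 = (i:ℝ) by ring, Real.rpow_natCast]
  simp only [lowerIncGamma, h]

lemma lig_nonneg (i : ℕ) {x : ℝ} (hx : 0 ≤ x) : 0 ≤ lowerIncGamma (1 + i) x := by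
  rw [lig_eq]
  apply intervalIntegral.integral_nonneg hx
  intro t ht
  exact mul_nonneg (pow_nonneg ht.1 i) (Real.exp_pos _).le

lemma lig_le (i : ℕ) {x : ℝ} (hx : 0 ≤ x) : lowerIncGamma (1 + i) x ≤ x ^ (i + 1) := by
  rw [lig_eq]
  calc ∫ t in (0:ℝ)..x, t ^ i * Real.exp (-t)
      ≤ ∫ _t in (0:ℝ)..x, x ^ i := by
        apply intervalIntegral.integral_mono_on hx
        · exact (Continuous.intervalIntegrable (by continuity) _ _)
        · exact intervalIntegrable_const
        · intro t ht
          calc t ^ i * Real.exp (-t) ≤ x ^ i * 1 :=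
                mul_le_mul (pow_le_pow_left₀ ht.1 ht.2 i)
                  (Real.exp_le_one_iff.mpr (neg_nonpos.mpr ht.1)) (Real.exp_pos _).le
                  (pow_nonneg hx i)
            _ = x ^ i := mul_one _
    _ = x ^ (i + 1) := by
        rw [intervalIntegral.integral_const]
        simp [pow_succ, mul_comm]

lemma lig_zero (x : ℝ) : lowerIncGamma 1 x = 1 - Real.exp (-x) := by
  have h : ∀ t : ℝ, t ^ ((1:ℝ) - 1) * Real.exp (-t) = Real.exp (-t) := fun t => by
    norm_num
  simp only [lowerIncGamma, h]
  rw [intervalIntegral.integral_comp_neg fun t => Real.exp t, integral_exp]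
  simp

section main
variable (q : ℝ)

noncomputable def gterm (x : ℝ) (i : ℕ) : ℝ :=
  (q ^ i / (Nat.factorial i)) * (lowerIncGamma (1 + i) x / (Nat.factorial i))

variable {q}

lemma gterm_nonneg (hq : 0 ≤ q) {x : ℝ} (hx : 0 ≤ x) (i : ℕ) : 0 ≤ gterm q x i :=
  mul_nonneg (div_nonneg (pow_nonneg hq i) (Nat.cast_nonneg _))
    (div_nonneg (lig_nonneg i hx) (Nat.cast_nonneg _))

lemma gterm_le (hq : 0 ≤ q) {x : ℝ} (hx : 0 ≤ x) (i : ℕ) :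
    gterm q x i ≤ (q ^ i / (Nat.factorial i)) * x ^ (i + 1) := by
  apply mul_le_mul_of_nonneg_left _ (div_nonneg (pow_nonneg hq i) (Nat.cast_nonneg _))
  calc lowerIncGamma (1 + i) x / (Nat.factorial i) ≤ lowerIncGamma (1 + i) x :=
        div_le_self (lig_nonneg i hx) (by exact_mod_cast Nat.one_le_iff_ne_zero.mpr (Nat.factorial_ne_zero i))
    _ ≤ x ^ (i + 1) := lig_le i hx

lemma gterm_summable (hq : 0 ≤ q) {x : ℝ} (hx : 0 ≤ x) : Summable (gterm q x) := by
  have heq : ∀ i : ℕ, (q ^ i / (Nat.factorial i)) * x ^ (i + 1)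
      = x * ((q * x) ^ i / (Nat.factorial i)) := by
    intro i; rw [mul_pow]; ring
  apply Summable.of_nonneg_of_le (gterm_nonneg hq hx)
    (fun i => (gterm_le hq hx i).trans (heq i).le)
  exact (Real.summable_pow_div_factorial (q * x)).mul_left x

lemma key_tendsto (hq : 0 ≤ q) :
    Tendsto (fun x => (∑' i, gterm q x i) / x) (nhdsWithin 0 (Set.Ioi 0)) (nhds 1) := by
  have hCsum : Summable (fun i : ℕ => q ^ (i + 1) / (Nat.factorial (i + 1))) :=
    (Real.summable_pow_div_factorial q).comp_injective Nat.succ_injective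
  set C : ℝ := ∑' i : ℕ, q ^ (i + 1) / (Nat.factorial (i + 1)) with hCdef
  -- part 1
  have h1 : Tendsto (fun x : ℝ => (1 - Real.exp (-x)) / x) (nhdsWithin 0 (Set.Ioi 0)) (nhds 1) := by
    have hd : HasDerivAt (fun x : ℝ => 1 - Real.exp (-x)) 1 0 := by
      have h0 : HasDerivAt (fun x : ℝ => Real.exp (-x)) (-1) 0 := by
        have := (Real.hasDerivAt_exp (-0)).comp 0 (hasDerivAt_neg (0:ℝ))
        simpa [Function.comp_def] using this
      simpa [Pi.sub_def] using (hasDerivAt_const (0:ℝ) (1:ℝ)).sub h0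
    have h2 := hasDerivAt_iff_tendsto_slope.mp hd
    have h3 : Tendsto (slope (fun x : ℝ => 1 - Real.exp (-x)) 0)
        (nhdsWithin 0 (Set.Ioi 0)) (nhds 1) :=
      h2.mono_left (nhdsWithin_mono 0 (fun x hx => ne_of_gt hx))
    apply h3.congr
    intro x
    rw [slope_def_field]
    simp
  -- part 2
  have h2 : Tendsto (fun x => (∑' i, gterm q x (i + 1)) / x)
      (nhdsWithin 0 (Set.Ioi 0)) (nhds 0) := by
    have hmem : ∀ᶠ x in nhdsWithin (0:ℝ) (Set.Ioi 0), x ∈ Set.Ioo (0:ℝ) 1 :=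
      Ioo_mem_nhdsGT_of_mem ⟨le_rfl, one_pos⟩
    have htail : ∀ x ∈ Set.Ioo (0:ℝ) 1, (∑' i, gterm q x (i + 1)) ≤ x ^ 2 * C := by
      intro x hx
      have hxx : (0:ℝ) ≤ x := hx.1.le
      have hterm : ∀ i : ℕ, gterm q x (i + 1) ≤ x ^ 2 * (q ^ (i + 1) / (Nat.factorial (i + 1))) := by
        intro i
        calc gterm q x (i + 1) ≤ (q ^ (i + 1) / (Nat.factorial (i + 1))) * x ^ (i + 2) :=
              gterm_le hq hxx (i + 1)
          _ ≤ (q ^ (i + 1) / (Nat.factorial (i + 1))) * x ^ 2 := by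
              apply mul_le_mul_of_nonneg_left _ (div_nonneg (pow_nonneg hq _) (Nat.cast_nonneg _))
              exact pow_le_pow_of_le_one hxx hx.2.le (by omega)
          _ = x ^ 2 * (q ^ (i + 1) / (Nat.factorial (i + 1))) := mul_comm _ _
      calc (∑' i, gterm q x (i + 1))
          ≤ ∑' i : ℕ, x ^ 2 * (q ^ (i + 1) / (Nat.factorial (i + 1))) :=
            Summable.tsum_le_tsum hterm ((gterm_summable hq hxx).comp_injective Nat.succ_injective)
              (hCsum.mul_left _)
        _ = x ^ 2 * C := tsum_mul_left
    apply squeeze_zero'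
    · filter_upwards [hmem] with x hx
      exact div_nonneg (tsum_nonneg fun i => gterm_nonneg hq hx.1.le (i + 1)) hx.1.le
    · filter_upwards [hmem] with x hx
      calc (∑' i, gterm q x (i + 1)) / x ≤ (x ^ 2 * C) / x := by
            gcongr
            · exact hx.1.le
            · exact htail x hx
        _ = C * x := by
            have hxne : x ≠ 0 := ne_of_gt hx.1
            field_simp
    · have hc : Continuous (fun x : ℝ => C * x) := by fun_prop
      have h' := (hc.tendsto 0).mono_left (nhdsWithin_le_nhds (s := Set.Ioi (0:ℝ)))
      simpa using h'
  -- combine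
  have heq : ∀ᶠ x in nhdsWithin (0:ℝ) (Set.Ioi 0),
      (1 - Real.exp (-x)) / x + (∑' i, gterm q x (i + 1)) / x = (∑' i, gterm q x i) / x := by
    filter_upwards [self_mem_nhdsWithin] with x hx
    rw [Summable.tsum_eq_zero_add (gterm_summable hq (le_of_lt hx)), add_div]
    congr 2
    show (1:ℝ) - Real.exp (-x) = gterm q x 0
    simp [gterm, lig_zero]
  have hsum := h1.add h2
  rw [add_zero] at hsum
  exact Filter.Tendsto.congr' heq hsum

end main

/-- High-SNR asymptotics: f(a, b, (2^R−1)/s) ~ ((2^R−1)/(b s)) e^{-a/b} as s → ∞. -/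
theorem stmt9 (a b R : ℝ) (ha : 0 ≤ a) (hb : 0 < b) (hR : 0 < R) :
    Tendsto (fun s : ℝ =>
        outageF a b ((2 ^ R - 1) / s) / (((2 ^ R - 1) / (b * s)) * Real.exp (-(a / b))))
      atTop (nhds 1) := by
  have hq : 0 ≤ a / b := div_nonneg ha hb.le
  have hK : 0 < (2:ℝ) ^ R - 1 := by
    have : (1:ℝ) < 2 ^ R := (Real.one_lt_rpow_iff_of_pos (by norm_num)).mpr (Or.inl ⟨by norm_num, hR⟩)
    linarith
  have hxs : Tendsto (fun s : ℝ => ((2:ℝ) ^ R - 1) / (b * s)) atTop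
      (nhdsWithin 0 (Set.Ioi 0)) := by
    rw [tendsto_nhdsWithin_iff]
    constructor
    · exact Tendsto.div_atTop tendsto_const_nhds (Tendsto.const_mul_atTop hb tendsto_id)
    · filter_upwards [eventually_gt_atTop (0:ℝ)] with s hs
      exact div_pos hK (mul_pos hb hs)
  have hcomp := (key_tendsto hq).comp hxs
  apply hcomp.congr'
  filter_upwards [eventually_gt_atTop (0:ℝ)] with s hs
  have hx : ((2:ℝ) ^ R - 1) / (b * s) ≠ 0 := ne_of_gt (div_pos hK (mul_pos hb hs))
  have harg : ((2:ℝ) ^ R - 1) / s / b = ((2:ℝ) ^ R - 1) / (b * s) := by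
    rw [div_div, mul_comm]
  show (∑' i, gterm (a / b) (((2:ℝ) ^ R - 1) / (b * s)) i) / (((2:ℝ) ^ R - 1) / (b * s))
      = outageF a b (((2:ℝ) ^ R - 1) / s) / ((((2:ℝ) ^ R - 1) / (b * s)) * Real.exp (-(a / b)))
  rw [outageF, harg]
  rw [mul_comm (((2:ℝ) ^ R - 1) / (b * s)) (Real.exp (-(a / b)))]
  rw [mul_div_mul_left _ _ (Real.exp_ne_zero _)]
  rfl
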